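/- Let φ_ε : (0, a) → (a_m ε, a) be a C¹ increasing function with Dφ_ε(0) = Dφ_ε(a) = 1 and |Dφ_ε − 1| ≤ cε, and suppose |φ_ε(t) − t| ≤ c'ε for all t ∈ (0, a). Then for every u ∈ H¹((0,a)), ∫_{a_m ε}^{a} |u(t) − u(φ_ε^{-1}(t))|² dt ≤ Cε² ∫_0^a |u'(t)|² dt, with C depending only on c, c' and a. -/

import Mathlib

open MeasureTheory Set
open scoped ENNReal

lemma cs_aux {S : Set ℝ} (f : ℝ → ℝ)
    (hfm : AEStronglyMeasurable f (volume.restrict S))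
    (hf2 : IntegrableOn (fun x => f x ^ 2) S) (hS : volume S ≠ ⊤) :
    (∫ x in S, f x) ^ 2 ≤ (volume S).toReal * ∫ x in S, f x ^ 2 := by
  have hfin : IsFiniteMeasure (volume.restrict S) :=
    ⟨by simpa [Measure.restrict_apply_univ] using hS.lt_top⟩
  have h2 : (2 : ℝ).HolderConjugate 2 := Real.HolderConjugate.two_two
  have hmem : MemLp (fun x => |f x|) (ENNReal.ofReal 2) (volume.restrict S) := by
    rw [show ENNReal.ofReal 2 = 2 by norm_num]
    refine (memLp_two_iff_integrable_sq (by simpa [Real.norm_eq_abs] using hfm.norm)).2 ?_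
    simp only [sq_abs]; exact hf2
  have hone : MemLp (fun _ : ℝ => (1:ℝ)) (ENNReal.ofReal 2) (volume.restrict S) := memLp_const 1
  have key := integral_mul_le_Lp_mul_Lq_of_nonneg h2
    (Filter.Eventually.of_forall (fun x => abs_nonneg (f x)))
    (Filter.Eventually.of_forall (fun _ => zero_le_one)) hmem hone
  have hr2 : ∀ x : ℝ, |f x| ^ (2:ℝ) = f x ^ 2 := fun x => by
    rw [show (2:ℝ) = ((2:ℕ):ℝ) by norm_num, Real.rpow_natCast]; exact sq_abs _
  simp only [mul_one, Real.one_rpow, hr2] at key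
  have habs : |∫ x in S, f x| ≤ ∫ x in S, |f x| := by
    simpa using norm_integral_le_integral_norm (μ := volume.restrict S) f
  have hint1 : ∫ x in S, (1:ℝ) = (volume S).toReal := by
    simp [Measure.restrict_apply_univ, Measure.real]
  rw [hint1] at key
  have hnn2 : 0 ≤ ∫ x in S, f x ^ 2 := by positivity
  calc (∫ x in S, f x) ^ 2 ≤ (∫ x in S, |f x|) ^ 2 := by
        rw [← sq_abs (∫ x in S, f x)]
        exact pow_le_pow_left₀ (abs_nonneg _) habs 2
    _ ≤ ((∫ x in S, f x ^ 2) ^ ((1:ℝ)/2) * ((volume S).toReal) ^ ((1:ℝ)/2)) ^ 2 := by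
        refine pow_le_pow_left₀ (integral_nonneg fun x => abs_nonneg _) key 2
    _ = (volume S).toReal * ∫ x in S, f x ^ 2 := by
        rw [← Real.sqrt_eq_rpow, ← Real.sqrt_eq_rpow, ← Real.sqrt_mul hnn2,
          Real.sq_sqrt (by positivity)]
        ring

set_option maxHeartbeats 2000000 in
/-- One-dimensional shortening-map estimate: if `φ_ε : (0,a) → (a_m ε, a)` is a `C¹`
increasing map with `Dφ_ε = 1` at the endpoints, `|Dφ_ε − 1| ≤ cε` and `|φ_ε(t) − t| ≤ c'ε`,
then for every `u ∈ H¹((0,a))`,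
`∫_{a_m ε}^{a} |u(t) − u(φ_ε⁻¹(t))|² dt ≤ C ε² ∫_0^a |u'|²` with `C = C(c, c', a)`. -/
theorem stmt19 (a c c' am : ℝ) (ha : 0 < a) (hc : 0 < c) (hc' : 0 < c') (ham : 0 < am) :
    ∃ C : ℝ, 0 < C ∧ ∀ ε : ℝ, 0 < ε → am * ε < a →
      ∀ φ dφ ψ : ℝ → ℝ,
        (∀ t ∈ Icc 0 a, HasDerivAt φ (dφ t) t) →
        StrictMonoOn φ (Icc 0 a) →
        MapsTo φ (Ioo 0 a) (Ioo (am * ε) a) →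
        SurjOn φ (Ioo 0 a) (Ioo (am * ε) a) →
        dφ 0 = 1 → dφ a = 1 →
        (∀ t ∈ Icc 0 a, |dφ t - 1| ≤ c * ε) →
        (∀ t ∈ Icc 0 a, |φ t - t| ≤ c' * ε) →
        (∀ t ∈ Ioo (am * ε) a, ψ t ∈ Ioo 0 a ∧ φ (ψ t) = t) →
        ∀ u u' : ℝ → ℝ,
          (∀ t ∈ Ioo 0 a, HasDerivAt u (u' t) t) →
          IntegrableOn (fun t => (u' t) ^ 2) (Ioo 0 a) →
          ∫ t in Ioo (am * ε) a, (u t - u (ψ t)) ^ 2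
            ≤ C * ε ^ 2 * ∫ t in Ioo 0 a, (u' t) ^ 2 := by
  refine ⟨2 * c' ^ 2, by positivity, ?_⟩
  intro ε hε hamε φ dφ ψ hφderiv hmono hmaps hsurj h0 h1 hdφ hφclose hψ u u' huderiv hu'int
  set δ := c' * ε with hδdef
  have hδ : 0 < δ := by positivity
  set I := Ioo (am * ε) a with hIdef
  set Ω := Ioo (0:ℝ) a with hΩdef
  set h : ℝ → ℝ := fun s => (deriv u s) ^ 2 with hhdef
  have hderiv_eq : ∀ s ∈ Ω, deriv u s = u' s := fun s hs => (huderiv s hs).deriv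
  have hhint : IntegrableOn h Ω := by
    exact hu'int.congr_fun (fun s hs => by simp [hhdef, hderiv_eq s hs]) measurableSet_Ioo
  have hint_eq : ∫ s in Ω, h s = ∫ s in Ω, (u' s) ^ 2 :=
    setIntegral_congr_fun measurableSet_Ioo (fun s hs => by simp [hhdef, hderiv_eq s hs])
  have hm : Measurable h := (measurable_deriv u).pow_const 2
  set g : ℝ → ℝ≥0∞ := fun s => Ω.indicator (fun s => ENNReal.ofReal (h s)) s with hgdef
  have hgm : Measurable g := (ENNReal.measurable_ofReal.comp hm).indicator measurableSet_Ioo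
  set M : ℝ≥0∞ := ∫⁻ s, g s with hMdef
  have hM : M = ENNReal.ofReal (∫ s in Ω, h s) := by
    rw [hMdef, hgdef, lintegral_indicator measurableSet_Ioo,
      ← ofReal_integral_eq_lintegral_ofReal hhint
        (Filter.Eventually.of_forall fun s => by positivity)]
  have hMfin : M ≠ ⊤ := by rw [hM]; exact ENNReal.ofReal_ne_top
  set G : ℝ → ℝ≥0∞ := fun t => ∫⁻ s in Icc (t - δ) (t + δ), g s with hGdef
  set k : ℝ × ℝ → ℝ≥0∞ :=
    fun p => ({q : ℝ × ℝ | |q.2 - q.1| ≤ δ}).indicator (fun q => g q.2) p with hkdef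
  have hsetm : MeasurableSet {q : ℝ × ℝ | |q.2 - q.1| ≤ δ} := by
    have : IsClosed {q : ℝ × ℝ | |q.2 - q.1| ≤ δ} :=
      isClosed_le (by continuity) continuous_const
    exact this.measurableSet
  have hkm : Measurable k := (hgm.comp measurable_snd).indicator hsetm
  have hkG : ∀ t s, (Icc (t - δ) (t + δ)).indicator g s = k (t, s) := by
    intro t s
    simp only [hkdef, indicator_apply, mem_Icc, mem_setOf_eq]
    exact if_congr (by rw [abs_le]; constructor <;> rintro ⟨h1, h2⟩ <;>
      constructor <;> linarith) rfl rfl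
  have hGk : ∀ t, G t = ∫⁻ s, k (t, s) := by
    intro t
    show ∫⁻ s in Icc (t - δ) (t + δ), g s = ∫⁻ s, k (t, s)
    rw [← lintegral_indicator measurableSet_Icc]
    exact lintegral_congr fun s => hkG t s
  have hGm : Measurable G := by
    have : G = fun t => ∫⁻ s, (fun t s => k (t, s)) t s := funext fun t => hGk t
    rw [this]
    exact Measurable.lintegral_prod_right hkm
  have hGle : ∀ t, G t ≤ M := by
    intro t
    rw [hGdef, hMdef]
    exact setLIntegral_le_lintegral _ _
  set F : ℝ → ℝ := fun t => δ * (G t).toReal with hFdef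
  -- Integrability of `deriv u` on Ω
  have hIuint : IntegrableOn (deriv u) Ω := by
    have hbnd : IntegrableOn (fun s => h s + 1) Ω :=
      hhint.add (integrableOn_const measure_Ioo_lt_top.ne)
    refine Integrable.mono' hbnd (measurable_deriv u).aestronglyMeasurable ?_
    refine Filter.Eventually.of_forall fun s => ?_
    rw [Real.norm_eq_abs]
    show |deriv u s| ≤ deriv u s ^ 2 + 1
    nlinarith [sq_nonneg (|deriv u s| - 1), abs_nonneg (deriv u s), sq_abs (deriv u s)]
  -- Step A: pointwise bound
  have stepA : ∀ t ∈ I, (u t - u (ψ t)) ^ 2 ≤ F t := by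
    intro t ht
    obtain ⟨hψmem, hφψ⟩ := hψ t ht
    have ht' : t ∈ Ω := ⟨lt_trans (by positivity) ht.1, ht.2⟩
    have hclose : |t - ψ t| ≤ δ := by
      have := hφclose (ψ t) (Ioo_subset_Icc_self hψmem)
      rwa [hφψ] at this
    set A := min t (ψ t) with hAdef
    set B := max t (ψ t) with hBdef
    have hAB : A ≤ B := min_le_max
    have hAΩ : A ∈ Ω := ⟨lt_min ht'.1 hψmem.1, lt_of_le_of_lt (min_le_left _ _) ht'.2⟩
    have hBΩ : B ∈ Ω := ⟨lt_of_lt_of_le ht'.1 (le_max_left _ _), max_lt ht'.2 hψmem.2⟩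
    have hsub : Icc A B ⊆ Ω := fun x hx =>
      ⟨lt_of_lt_of_le hAΩ.1 hx.1, lt_of_le_of_lt hx.2 hBΩ.2⟩
    have hsubIoc : Ioc A B ⊆ Ω := fun x hx => hsub ⟨le_of_lt hx.1, hx.2⟩
    have hBA : B - A ≤ δ := by
      rw [hBdef, hAdef, max_sub_min_eq_abs]; rwa [abs_sub_comm] at hclose
    have hintAB : IntervalIntegrable (deriv u) volume A B := by
      rw [intervalIntegrable_iff_integrableOn_Ioc_of_le hAB]
      exact hIuint.mono_set hsubIoc
    have hftc : ∫ x in A..B, deriv u x = u B - u A := by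
      refine intervalIntegral.integral_eq_sub_of_hasDerivAt (fun x hx => ?_) hintAB
      rw [uIcc_of_le hAB] at hx
      have hd := huderiv x (hsub hx)
      rwa [hd.deriv]
    have hEq : (u t - u (ψ t)) ^ 2 = (u B - u A) ^ 2 := by
      rcases le_total t (ψ t) with hle | hle
      · rw [hAdef, hBdef, min_eq_left hle, max_eq_right hle]; ring
      · rw [hAdef, hBdef, min_eq_right hle, max_eq_left hle]
    have hIocIcc : Ioc A B ⊆ Icc (t - δ) (t + δ) := by
      intro x hx
      have h1 : t - δ ≤ A := by
        rcases abs_le.1 hclose with ⟨hl, hr⟩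
        rw [hAdef]; exact le_min (by linarith) (by linarith)
      have h2 : B ≤ t + δ := by
        rcases abs_le.1 hclose with ⟨hl, hr⟩
        rw [hBdef]; exact max_le (by linarith) (by linarith)
      exact ⟨le_trans h1 (le_of_lt hx.1), le_trans hx.2 h2⟩
    have hcs : (∫ x in Ioc A B, deriv u x) ^ 2
        ≤ (volume (Ioc A B)).toReal * ∫ x in Ioc A B, h x := by
      exact cs_aux (deriv u) (measurable_deriv u).aestronglyMeasurable.restrict
        (hhint.mono_set hsubIoc) measure_Ioc_lt_top.ne
    have hvol : (volume (Ioc A B)).toReal = B - A := by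
      rw [Real.volume_Ioc, ENNReal.toReal_ofReal (by linarith)]
    have hGfin : G t < ⊤ := lt_of_le_of_lt (hGle t) hMfin.lt_top
    have hIh : ∫ x in Ioc A B, h x ≤ (G t).toReal := by
      have h1 : ENNReal.ofReal (∫ x in Ioc A B, h x) = ∫⁻ x in Ioc A B, ENNReal.ofReal (h x) :=
        ofReal_integral_eq_lintegral_ofReal (hhint.mono_set hsubIoc)
          (Filter.Eventually.of_forall fun x => by positivity)
      have h2 : ∫⁻ x in Ioc A B, ENNReal.ofReal (h x) = ∫⁻ x in Ioc A B, g x := by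
        refine setLIntegral_congr_fun measurableSet_Ioc ?_
        intro x hx
        exact (indicator_of_mem (hsubIoc hx) fun s => ENNReal.ofReal (h s)).symm
      have h3 : ∫⁻ x in Ioc A B, g x ≤ G t := by
        rw [hGdef]; exact lintegral_mono_set hIocIcc
      have h4 : ENNReal.ofReal (∫ x in Ioc A B, h x) ≤ G t := by rw [h1, h2]; exact h3
      calc ∫ x in Ioc A B, h x
          = (ENNReal.ofReal (∫ x in Ioc A B, h x)).toReal := by
            rw [ENNReal.toReal_ofReal (integral_nonneg fun x => by positivity)]
        _ ≤ (G t).toReal := ENNReal.toReal_mono hGfin.ne h4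
    have hGnn : (0:ℝ) ≤ (G t).toReal := ENNReal.toReal_nonneg
    have hInn : (0:ℝ) ≤ ∫ x in Ioc A B, h x := integral_nonneg fun x => by positivity
    calc (u t - u (ψ t)) ^ 2 = (u B - u A) ^ 2 := hEq
      _ = (∫ x in A..B, deriv u x) ^ 2 := by rw [hftc]
      _ = (∫ x in Ioc A B, deriv u x) ^ 2 := by rw [intervalIntegral.integral_of_le hAB]
      _ ≤ (volume (Ioc A B)).toReal * ∫ x in Ioc A B, h x := hcs
      _ = (B - A) * ∫ x in Ioc A B, h x := by rw [hvol]
      _ ≤ δ * (G t).toReal := by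
          apply mul_le_mul hBA hIh hInn (le_of_lt hδ)
      _ = F t := rfl
  -- Step B: integrability of F on I
  have hFm : Measurable F := (hGm.ennreal_toReal).const_mul δ
  have hFle : ∀ t, F t ≤ δ * M.toReal := fun t =>
    mul_le_mul_of_nonneg_left (ENNReal.toReal_mono hMfin (hGle t)) (le_of_lt hδ)
  have hFnn : ∀ t, 0 ≤ F t := fun t => mul_nonneg (le_of_lt hδ) ENNReal.toReal_nonneg
  have hFint : IntegrableOn F I := by
    have hbnd : IntegrableOn (fun _ : ℝ => δ * M.toReal) I :=
      integrableOn_const measure_Ioo_lt_top.ne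
    refine Integrable.mono' hbnd hFm.aestronglyMeasurable ?_
    exact Filter.Eventually.of_forall fun t => by
      rw [Real.norm_eq_abs, abs_of_nonneg (hFnn t)]; exact hFle t
  -- Step C: bound on ∫ F
  have stepC : ∫ t in I, F t ≤ 2 * δ ^ 2 * ∫ s in Ω, h s := by
    have hGint : ∫ t in I, F t = δ * ∫ t in I, (G t).toReal := by
      rw [hFdef]; exact integral_const_mul δ _
    have hGtoReal : ∫ t in I, (G t).toReal = (∫⁻ t in I, G t).toReal := by
      refine integral_toReal (hGm.aemeasurable.restrict) ?_
      exact Filter.Eventually.of_forall fun t => lt_of_le_of_lt (hGle t) hMfin.lt_top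
    have hswap : ∫⁻ t in I, G t = ∫⁻ s, ∫⁻ t in I, k (t, s) := by
      calc ∫⁻ t in I, G t = ∫⁻ t in I, ∫⁻ s, k (t, s) := lintegral_congr fun t => hGk t
        _ = ∫⁻ s, ∫⁻ t in I, k (t, s) :=
          lintegral_lintegral_swap hkm.aemeasurable
    have hinner : ∀ s, ∫⁻ t in I, k (t, s) ≤ g s * ENNReal.ofReal (2 * δ) := by
      intro s
      have hind : ∀ t, k (t, s) = (Icc (s - δ) (s + δ)).indicator (fun _ => g s) t := by
        intro t
        simp only [hkdef, indicator_apply, mem_Icc, mem_setOf_eq]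
        exact if_congr (by rw [abs_le]; constructor <;> rintro ⟨h1, h2⟩ <;>
          constructor <;> linarith) rfl rfl
      calc ∫⁻ t in I, k (t, s)
          = ∫⁻ t in I, (Icc (s - δ) (s + δ)).indicator (fun _ => g s) t :=
            lintegral_congr fun t => hind t
        _ = g s * (volume.restrict I) (Icc (s - δ) (s + δ)) := by
            rw [lintegral_indicator measurableSet_Icc, setLIntegral_const]
        _ ≤ g s * volume (Icc (s - δ) (s + δ)) :=
            mul_le_mul_right (Measure.restrict_apply_le _ _) _
        _ = g s * ENNReal.ofReal (2 * δ) := by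
            rw [Real.volume_Icc]
            congr 1
            ring_nf
    have hbound : ∫⁻ t in I, G t ≤ M * ENNReal.ofReal (2 * δ) := by
      rw [hswap]
      calc ∫⁻ s, ∫⁻ t in I, k (t, s) ≤ ∫⁻ s, g s * ENNReal.ofReal (2 * δ) :=
            lintegral_mono hinner
        _ = M * ENNReal.ofReal (2 * δ) := by
            rw [hMdef]; exact lintegral_mul_const _ hgm
    have hrhsfin : M * ENNReal.ofReal (2 * δ) ≠ ⊤ :=
      ENNReal.mul_ne_top hMfin ENNReal.ofReal_ne_top
    have htr : (∫⁻ t in I, G t).toReal ≤ M.toReal * (2 * δ) := by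
      have := ENNReal.toReal_mono hrhsfin hbound
      rwa [ENNReal.toReal_mul, ENNReal.toReal_ofReal (by positivity)] at this
    have hMtr : M.toReal = ∫ s in Ω, h s := by
      rw [hM, ENNReal.toReal_ofReal (integral_nonneg fun s => by positivity)]
    calc ∫ t in I, F t = δ * ∫ t in I, (G t).toReal := hGint
      _ = δ * (∫⁻ t in I, G t).toReal := by rw [hGtoReal]
      _ ≤ δ * (M.toReal * (2 * δ)) := mul_le_mul_of_nonneg_left htr (le_of_lt hδ)
      _ = 2 * δ ^ 2 * ∫ s in Ω, h s := by rw [hMtr]; ring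
  -- Conclusion
  have hmain : ∫ t in I, (u t - u (ψ t)) ^ 2 ≤ ∫ t in I, F t := by
    refine integral_mono_of_nonneg (Filter.Eventually.of_forall fun t => by positivity) hFint ?_
    rw [Filter.EventuallyLE, ae_restrict_iff' measurableSet_Ioo]
    exact Filter.Eventually.of_forall fun t ht => stepA t ht
  calc ∫ t in I, (u t - u (ψ t)) ^ 2 ≤ ∫ t in I, F t := hmain
    _ ≤ 2 * δ ^ 2 * ∫ s in Ω, h s := stepC
    _ = 2 * c' ^ 2 * ε ^ 2 * ∫ t in Ω, (u' t) ^ 2 := by rw [hint_eq, hδdef]; ring
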